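/- There exist constants C > 0 and l₀ > 0 (depending only on n and V) such that for all cubes P ⊆ Q in ℝⁿ and all θ ≥ 0, (1 + r_P/ρ(x_P))^θ ≤ C^θ (1 + r_Q/ρ(x_Q))^{θ(1+l₀)}, i.e. Ψ_θ(P) ≲ Ψ_{θ(1+l₀)}(Q); more precisely, r_P/ρ(x_P) ≤ C (1 + r_Q/ρ(x_Q))^{1+l₀} whenever P ⊆ Q. -/

import Mathlib

open MeasureTheory Metric Set ENNReal

noncomputable section

abbrev Euc (n : ℕ) := EuclideanSpace ℝ (Fin n)

/-- An axis-parallel cube in `ℝⁿ`, given by its center and side length. -/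
structure Cube (n : ℕ) where
  center : Euc n
  side : ℝ

namespace Cube

variable {n : ℕ}

/-- The underlying set of a cube. -/
def set (Q : Cube n) : Set (Euc n) := {y : Euc n | ∀ i, |y i - Q.center i| ≤ Q.side / 2}

/-- The Lebesgue measure `|Q|` of a cube, as a real number. -/
def vol (Q : Cube n) : ℝ := (volume Q.set).toReal

/-- The concentric dilate `αQ` of a cube. -/
def dilate (Q : Cube n) (α : ℝ) : Cube n := ⟨Q.center, α * Q.side⟩

end Cube

/-- The average `|Q|⁻¹ ∫_Q f` of `f` over the cube `Q`. -/
def cubeAvg {n : ℕ} (Q : Cube n) (f : Euc n → ℝ) : ℝ :=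
  Q.vol⁻¹ * ∫ y in Q.set, f y

/-- `Ψ_θ(Q) = (1 + r_Q/ρ(x_Q))^θ` for a cube `Q`. -/
def Psi {n : ℕ} (ρ : Euc n → ℝ) (θ : ℝ) (Q : Cube n) : ℝ :=
  (1 + Q.side / ρ Q.center) ^ θ

/-- The average `|B(x,r)|⁻¹ ∫_{B(x,r)} f` of `f` over a ball. -/
def ballAvg {n : ℕ} (x : Euc n) (r : ℝ) (f : Euc n → ℝ) : ℝ :=
  (volume (ball x r)).toReal⁻¹ * ∫ y in ball x r, f y

/-- `Ψ_θ(B(x,r)) = (1 + r/ρ(x))^θ` for a ball. -/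
def PsiB {n : ℕ} (ρ : Euc n → ℝ) (θ : ℝ) (x : Euc n) (r : ℝ) : ℝ :=
  (1 + r / ρ x) ^ θ

/-- The critical radius function
`ρ(x) = sup { r > 0 : r^{-(n-2)} ∫_{B(x,r)} V ≤ 1 }` of a Schrödinger potential `V`. -/
def critRho {n : ℕ} (V : Euc n → ℝ) (x : Euc n) : ℝ :=
  sSup {r : ℝ | 0 < r ∧ (∫ y in ball x r, V y) ≤ r ^ ((n : ℝ) - 2)}

/-- A nonnegative, nontrivial, locally `L^q` potential satisfying the
reverse Hölder inequality `RH_q`. -/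
structure IsSchrodingerPotential (n : ℕ) (q : ℝ) (V : Euc n → ℝ) : Prop where
  nonneg : ∀ x, 0 ≤ V x
  nontrivial : ¬ (∀ᵐ x ∂(volume : Measure (Euc n)), V x = 0)
  locLq : ∀ (x : Euc n) (r : ℝ), 0 < r → IntegrableOn (fun y => V y ^ q) (ball x r) volume
  revHolder : ∃ C : ℝ, 0 < C ∧ ∀ (x : Euc n) (r : ℝ), 0 < r →
    ((volume (ball x r)).toReal⁻¹ * ∫ y in ball x r, V y ^ q) ^ q⁻¹ ≤
      C * ((volume (ball x r)).toReal⁻¹ * ∫ y in ball x r, V y)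

/-- The `A_p^{ρ,θ}` quantity of a weight `ω` on a single cube `Q`. -/
def apQuantity {n : ℕ} (ρ : Euc n → ℝ) (p θ : ℝ) (ω : Euc n → ℝ) (Q : Cube n) : ℝ :=
  ((Psi ρ θ Q)⁻¹ * cubeAvg Q ω) *
    ((Psi ρ θ Q)⁻¹ * cubeAvg Q (fun y => ω y ^ (-(p - 1)⁻¹))) ^ (p - 1)

/-- `A` is an admissible `A_p^{ρ,θ}` constant for `ω`. -/
def apBound {n : ℕ} (ρ : Euc n → ℝ) (p θ : ℝ) (ω : Euc n → ℝ) (A : ℝ) : Prop :=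
  ∀ Q : Cube n, 0 < Q.side → apQuantity ρ p θ ω Q ≤ A

/-- Membership `ω ∈ A_p^{ρ,θ}`. -/
def MemAp {n : ℕ} (ρ : Euc n → ℝ) (p θ : ℝ) (ω : Euc n → ℝ) : Prop :=
  (∀ x, 0 ≤ ω x) ∧ LocallyIntegrable ω volume ∧ ∃ A : ℝ, apBound ρ p θ ω A

/-- The characteristic `[ω]_{A_p^{ρ,θ}}`, as the least admissible constant. -/
def apNorm {n : ℕ} (ρ : Euc n → ℝ) (p θ : ℝ) (ω : Euc n → ℝ) : ℝ :=
  sInf {A : ℝ | 0 ≤ A ∧ apBound ρ p θ ω A}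

/-- `A` is an admissible `BMO_θ(ρ)` constant for `b`. -/
def bmoBound {n : ℕ} (ρ : Euc n → ℝ) (θ : ℝ) (b : Euc n → ℝ) (A : ℝ) : Prop :=
  ∀ (x : Euc n) (r : ℝ), 0 < r →
    (PsiB ρ θ x r)⁻¹ * ballAvg x r (fun y => |b y - ballAvg x r b|) ≤ A

/-- Membership `b ∈ BMO_θ(ρ)`. -/
def MemBMO {n : ℕ} (ρ : Euc n → ℝ) (θ : ℝ) (b : Euc n → ℝ) : Prop :=
  LocallyIntegrable b volume ∧ ∃ A : ℝ, bmoBound ρ θ b A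

/-- The norm `‖b‖_{BMO_θ(ρ)}`. -/
def bmoNorm {n : ℕ} (ρ : Euc n → ℝ) (θ : ℝ) (b : Euc n → ℝ) : ℝ :=
  sInf {A : ℝ | 0 ≤ A ∧ bmoBound ρ θ b A}

/-- The weighted norm `‖f‖_{L^p(ω)}`, valued in `ℝ≥0∞`. -/
def wLp {n : ℕ} (p : ℝ) (ω : Euc n → ℝ) (f : Euc n → ℝ) : ℝ≥0∞ :=
  (∫⁻ x, ENNReal.ofReal (|f x| ^ p * ω x)) ^ (1 / p)

/-- The weighted norm `‖g‖_{L^p(ω)}` of an `ℝ≥0∞`-valued function. -/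
def wLpE {n : ℕ} (p : ℝ) (ω : Euc n → ℝ) (g : Euc n → ℝ≥0∞) : ℝ≥0∞ :=
  (∫⁻ x, g x ^ p * ENNReal.ofReal (ω x)) ^ (1 / p)

/-- `S` is an `η`-sparse family of cubes. -/
def IsSparseFamily {n : ℕ} (η : ℝ) (S : Set (Cube n)) : Prop :=
  S.Countable ∧ (∀ Q ∈ S, 0 < Q.side) ∧
    ∃ E : Cube n → Set (Euc n),
      (∀ Q ∈ S, E Q ⊆ Q.set ∧ MeasurableSet (E Q) ∧
        ENNReal.ofReal (η * Q.vol) ≤ volume (E Q)) ∧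
      S.PairwiseDisjoint E

/-- The sparse operator `𝒜_S^{r,p₀,ρ,N}`. -/
def sparseOp {n : ℕ} (ρ : Euc n → ℝ) (r p₀ N : ℝ) (S : Set (Cube n)) (f : Euc n → ℝ)
    (x : Euc n) : ℝ≥0∞ :=
  (∑' Q : S,
      ENNReal.ofReal ((cubeAvg Q.1 (fun y => |f y| ^ r)) ^ (p₀ / r) * (Psi ρ N Q.1)⁻¹ ^ p₀) *
        Q.1.set.indicator (fun _ => (1 : ℝ≥0∞)) x) ^ (1 / p₀)

/-- The commutator sparse operator `𝒯_{S,b}^{ρ,N}`. -/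
def sparseCommOp {n : ℕ} (ρ : Euc n → ℝ) (N : ℝ) (S : Set (Cube n)) (b f : Euc n → ℝ)
    (x : Euc n) : ℝ :=
  ∑' Q : S, |b x - cubeAvg Q.1 b| * cubeAvg Q.1 f * (Psi ρ N Q.1)⁻¹ *
    Q.1.set.indicator (fun _ => (1 : ℝ)) x

/-- The adjoint commutator sparse operator `𝒯_{S,b}^{ρ,N,⋆}`. -/
def sparseCommOpStar {n : ℕ} (ρ : Euc n → ℝ) (N : ℝ) (S : Set (Cube n)) (b f : Euc n → ℝ)
    (x : Euc n) : ℝ :=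
  ∑' Q : S, cubeAvg Q.1 (fun y => |b y - cubeAvg Q.1 b| * f y) * (Psi ρ N Q.1)⁻¹ *
    Q.1.set.indicator (fun _ => (1 : ℝ)) x

/-- The operator norm of `T` on `L^p(ω)`, valued in `ℝ≥0∞`. -/
def opNormW {n : ℕ} (p : ℝ) (ω : Euc n → ℝ) (T : (Euc n → ℝ) → Euc n → ℝ) : ℝ≥0∞ :=
  ⨆ f : {f : Euc n → ℝ // wLp p ω f ≠ 0 ∧ wLp p ω f ≠ ⊤}, wLp p ω (T f.1) / wLp p ω f.1

/-- The Luxemburg norm `‖g‖_{Φ,Q}` over a cube `Q`. -/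
def luxNorm {n : ℕ} (Φ : ℝ → ℝ) (Q : Cube n) (g : Euc n → ℝ) : ℝ :=
  sInf {lam : ℝ | 0 < lam ∧ cubeAvg Q (fun y => Φ (|g y| / lam)) ≤ 1}

/-- The Young function `Φ(t) = t log(e + t)`. -/
def PhiLlogL (t : ℝ) : ℝ := t * Real.log (Real.exp 1 + t)

/-- The Young function `Φ̄(t) = e^t - 1`. -/
def PhiExp (t : ℝ) : ℝ := Real.exp t - 1

/-- The weighted maximal function `M_ω h(x) = sup_{Q ∋ x} ω(Q)⁻¹ ∫_Q |h| ω`. -/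
def wMax {n : ℕ} (ω h : Euc n → ℝ) (x : Euc n) : ℝ :=
  ⨆ Q : {Q : Cube n // 0 < Q.side ∧ x ∈ Q.set},
    (∫ y in Q.1.set, ω y)⁻¹ * ∫ y in Q.1.set, |h y| * ω y

/-- The (unweighted) `L^q`-norm, valued in `ℝ≥0∞`. -/
def lpN {n : ℕ} (q : ℝ) (f : Euc n → ℝ) : ℝ≥0∞ :=
  (∫⁻ x, ENNReal.ofReal (|f x| ^ q)) ^ (1 / q)

/-- `T` is of weak type `(q,q)`. -/
def IsWeakType {n : ℕ} (T : (Euc n → ℝ) → Euc n → ℝ) (q : ℝ) : Prop :=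
  ∃ C : ℝ, 0 < C ∧ ∀ f : Euc n → ℝ, AEMeasurable f volume → lpN q f ≠ ⊤ →
    ∀ lam : ℝ, 0 < lam →
      volume {x | lam < |T f x|} ≤ (ENNReal.ofReal C * lpN q f / ENNReal.ofReal lam) ^ q

/-- The localized sharp grand maximal truncation operator `ℳ_{T,α}^{#}`. -/
def grandMax {n : ℕ} (T : (Euc n → ℝ) → Euc n → ℝ) (α : ℝ) (f : Euc n → ℝ) (x : Euc n) :
    ℝ≥0∞ :=
  ⨆ Q : {Q : Cube n // 0 < Q.side ∧ x ∈ Q.set},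
    essSup
      (fun z : Euc n × Euc n =>
        ENNReal.ofReal
          |T (Set.indicator ((Q.1.dilate α).set)ᶜ f) z.1 -
            T (Set.indicator ((Q.1.dilate α).set)ᶜ f) z.2|)
      ((volume.restrict Q.1.set).prod (volume.restrict Q.1.set))

/-- An `ℝ≥0∞`-valued operator is of weak type `(r,r)`. -/
def IsWeakTypeE {n : ℕ} (M : (Euc n → ℝ) → Euc n → ℝ≥0∞) (r : ℝ) : Prop :=
  ∃ C : ℝ, 0 < C ∧ ∀ f : Euc n → ℝ, AEMeasurable f volume → lpN r f ≠ ⊤ →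
    ∀ lam : ℝ, 0 < lam →
      volume {x | ENNReal.ofReal lam < M f x} ≤
        (ENNReal.ofReal C * lpN r f / ENNReal.ofReal lam) ^ r

/-- The maximal function `ℳ_{r,ρ,θ}` (over balls), valued in `ℝ≥0∞`. -/
def maxFnB {n : ℕ} (ρ : Euc n → ℝ) (r θ : ℝ) (f : Euc n → ℝ) (x : Euc n) : ℝ≥0∞ :=
  ⨆ c : Euc n, ⨆ s : ℝ, ⨆ _ : 0 < s ∧ x ∈ ball c s,
    ENNReal.ofReal ((PsiB ρ θ c s)⁻¹ * (ballAvg c s (fun y => |f y| ^ r)) ^ r⁻¹)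

/-- The maximal function `ℳ_{ρ,θ}` (over cubes). -/
def maxC {n : ℕ} (ρ : Euc n → ℝ) (θ : ℝ) (f : Euc n → ℝ) (x : Euc n) : ℝ :=
  ⨆ Q : {Q : Cube n // 0 < Q.side ∧ x ∈ Q.set},
    (Psi ρ θ Q.1)⁻¹ * cubeAvg Q.1 (fun y => |f y|)

/-- The maximal function `ℳ_{L log L, ρ, θ}` (over cubes). -/
def maxLlogL {n : ℕ} (ρ : Euc n → ℝ) (θ : ℝ) (f : Euc n → ℝ) (x : Euc n) : ℝ :=
  ⨆ Q : {Q : Cube n // 0 < Q.side ∧ x ∈ Q.set},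
    (Psi ρ θ Q.1)⁻¹ * luxNorm PhiLlogL Q.1 f

/-- The reverse Hölder exponent `r_ω = 1 + 1/(2^{2p(1+θ)+n+1}·A)`. -/
def rExp (n : ℕ) (p θ A : ℝ) : ℝ := 1 + ((2 : ℝ) ^ (2 * p * (1 + θ) + (n : ℝ) + 1) * A)⁻¹

namespace S9T

variable {n : ℕ} {q C : ℝ} {V : EuclideanSpace ℝ (Fin n) → ℝ}

lemma nontrivial_euc (hn : 0 < n) : Nontrivial (EuclideanSpace ℝ (Fin n)) := by
  refine ⟨0, EuclideanSpace.single ⟨0, hn⟩ 1, fun h => ?_⟩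
  have := congrArg (fun f : EuclideanSpace ℝ (Fin n) => f ⟨0, hn⟩) h
  simp [EuclideanSpace.single_apply] at this

lemma volBall (hn : 0 < n) (x : EuclideanSpace ℝ (Fin n)) {r : ℝ} (hr : 0 ≤ r) :
    (volume (ball x r)).toReal = r ^ n * (volume (ball (0:EuclideanSpace ℝ (Fin n)) 1)).toReal := by
  haveI := nontrivial_euc hn
  rw [Measure.addHaar_ball volume x hr, ENNReal.toReal_mul, ENNReal.toReal_ofReal (by positivity),
    finrank_euclideanSpace_fin]

lemma unitBall_pos : 0 < (volume (ball (0:EuclideanSpace ℝ (Fin n)) 1)).toReal :=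
  ENNReal.toReal_pos (measure_ball_pos volume 0 one_pos).ne' measure_ball_lt_top.ne

lemma volBall_pos (hn : 0 < n) (x : EuclideanSpace ℝ (Fin n)) {r : ℝ} (hr : 0 < r) :
    0 < (volume (ball x r)).toReal := by
  have := unitBall_pos (n := n)
  rw [volBall hn x hr.le]; positivity


lemma subset_bound (hn : 0 < n) (hq1 : 1 < q) (hV0 : ∀ x, 0 ≤ V x)
    {x : EuclideanSpace ℝ (Fin n)} {R : ℝ} (hR : 0 < R)
    (hLq : IntegrableOn (fun y => V y ^ q) (ball x R) volume)
    (hRH : ((volume (ball x R)).toReal⁻¹ * ∫ y in ball x R, V y ^ q) ^ q⁻¹ ≤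
      C * ((volume (ball x R)).toReal⁻¹ * ∫ y in ball x R, V y))
    {E : Set (EuclideanSpace ℝ (Fin n))} (hE : MeasurableSet E) (hEs : E ⊆ ball x R) :
    ∫ y in E, V y ≤
      C * ((volume E).toReal / (volume (ball x R)).toReal) ^ (1 - q⁻¹) *
        ∫ y in ball x R, V y := by
  have hq0 : 0 < q := lt_trans one_pos hq1
  set q' : ℝ := q / (q - 1) with hq'def
  have hpq : q.HolderConjugate q' := Real.HolderConjugate.conjExponent hq1
  have hq'inv : q'⁻¹ = 1 - q⁻¹ := by
    rw [hq'def]; field_simp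
  have hEfin : volume E < ⊤ := lt_of_le_of_lt (measure_mono hEs) measure_ball_lt_top
  haveI : IsFiniteMeasure (volume.restrict E) :=
    ⟨by rw [Measure.restrict_apply_univ]; exact hEfin⟩
  have hLqE : IntegrableOn (fun y => V y ^ q) E volume := hLq.mono_set hEs
  have hsmE : AEStronglyMeasurable V (volume.restrict E) := by
    have h1 : V = fun y => (V y ^ q) ^ q⁻¹ := by
      funext y
      rw [← Real.rpow_mul (hV0 y), mul_inv_cancel₀ (by positivity), Real.rpow_one]
    rw [h1]
    exact (Real.continuous_rpow_const (by positivity)).comp_aestronglyMeasurable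
      hLqE.aestronglyMeasurable
  -- Memℒp of V with exponent q on E
  have hmem : MemLp V (ENNReal.ofReal q) (volume.restrict E) := by
    have hq0' : ENNReal.ofReal q ≠ 0 := by simp [hq0]
    refine (memLp_norm_rpow_iff (q := ENNReal.ofReal q) (p := ENNReal.ofReal q) hsmE hq0'
      ENNReal.ofReal_ne_top).mp ?_
    rw [ENNReal.div_self hq0' ENNReal.ofReal_ne_top]
    rw [memLp_one_iff_integrable]
    have : (fun y : EuclideanSpace ℝ (Fin n) => ‖V y‖ ^ (ENNReal.ofReal q).toReal) =
        fun y => V y ^ q := by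
      funext y
      rw [Real.norm_of_nonneg (hV0 y), ENNReal.toReal_ofReal hq0.le]
    rw [this]
    exact hLqE
  have hmem1 : MemLp (fun _ : EuclideanSpace ℝ (Fin n) => (1:ℝ)) (ENNReal.ofReal q')
      (volume.restrict E) := memLp_const 1
  -- Hölder
  have holder := MeasureTheory.integral_mul_le_Lp_mul_Lq_of_nonneg hpq
    (Filter.Eventually.of_forall fun y => hV0 y)
    (Filter.Eventually.of_forall fun _ => zero_le_one) hmem hmem1
  simp only [mul_one] at holder
  have hconst : (∫ _ in E, (1:ℝ) ^ q' ∂volume) = (volume E).toReal := by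
    simp [Real.one_rpow, Measure.restrict_apply_univ, Measure.real]
  rw [hconst] at holder
  -- notation
  set vB : ℝ := (volume (ball x R)).toReal with hvBdef
  set vE : ℝ := (volume E).toReal with hvEdef
  set I1 : ℝ := ∫ y in ball x R, V y with hI1def
  set IqB : ℝ := ∫ y in ball x R, V y ^ q with hIqBdef
  set IqE : ℝ := ∫ y in E, V y ^ q with hIqEdef
  have hvB : 0 < vB := by
    rw [hvBdef]
    exact ENNReal.toReal_pos (measure_ball_pos volume x hR).ne' measure_ball_lt_top.ne
  have hvE : 0 ≤ vE := ENNReal.toReal_nonneg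
  have hIqE0 : 0 ≤ IqE := setIntegral_nonneg hE fun y _ => Real.rpow_nonneg (hV0 y) q
  have hIqB0 : 0 ≤ IqB :=
    setIntegral_nonneg measurableSet_ball fun y _ => Real.rpow_nonneg (hV0 y) q
  have hI10 : 0 ≤ I1 := setIntegral_nonneg measurableSet_ball fun y _ => hV0 y
  -- monotonicity of ∫ V^q
  have h2 : IqE ≤ IqB :=
    setIntegral_mono_set hLq (Filter.Eventually.of_forall fun y => Real.rpow_nonneg (hV0 y) q)
      (HasSubset.Subset.eventuallyLE hEs)
  -- RH rearranged
  have h4 : IqB ^ q⁻¹ ≤ C * vB ^ (q⁻¹ - 1) * I1 := by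
    have e1 : (vB⁻¹ * IqB) ^ q⁻¹ = (vB⁻¹) ^ q⁻¹ * IqB ^ q⁻¹ :=
      Real.mul_rpow (by positivity) hIqB0
    have e2 : vB ^ q⁻¹ * (vB⁻¹) ^ q⁻¹ = 1 := by
      rw [← Real.mul_rpow hvB.le (by positivity), mul_inv_cancel₀ hvB.ne', Real.one_rpow]
    have e3 : vB ^ q⁻¹ * (vB⁻¹) ^ q⁻¹ * IqB ^ q⁻¹ ≤ vB ^ q⁻¹ * (C * (vB⁻¹ * I1)) := by
      rw [mul_assoc, ← e1]
      exact mul_le_mul_of_nonneg_left hRH (Real.rpow_nonneg hvB.le _)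
    rw [e2, one_mul] at e3
    refine e3.trans (le_of_eq ?_)
    rw [Real.rpow_sub hvB, Real.rpow_one]
    ring
  -- combine
  have h3 : IqE ^ (1/q) ≤ IqB ^ q⁻¹ := by
    rw [one_div]
    exact Real.rpow_le_rpow hIqE0 h2 (by positivity)
  have h5 : ∫ y in E, V y ≤ (C * vB ^ (q⁻¹ - 1) * I1) * vE ^ (1/q') := by
    refine holder.trans ?_
    exact mul_le_mul_of_nonneg_right (h3.trans h4) (Real.rpow_nonneg hvE _)
  refine h5.trans (le_of_eq ?_)
  rw [one_div, hq'inv, Real.div_rpow hvE hvB.le]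
  have e6 : vB ^ (q⁻¹ - 1) = (vB ^ (1 - q⁻¹))⁻¹ := by
    rw [← Real.rpow_neg hvB.le]
    congr 1
    ring
  rw [e6]
  field_simp


lemma aesm_V {s : Set (EuclideanSpace ℝ (Fin n))} (hq1 : 1 < q) (hV0 : ∀ x, 0 ≤ V x)
    (hLq : IntegrableOn (fun y => V y ^ q) s volume) :
    AEStronglyMeasurable V (volume.restrict s) := by
  have h1 : V = fun y => (V y ^ q) ^ q⁻¹ := by
    funext y
    rw [← Real.rpow_mul (hV0 y), mul_inv_cancel₀ (by positivity), Real.rpow_one]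
  rw [h1]
  exact (Real.continuous_rpow_const (by positivity)).comp_aestronglyMeasurable
    hLq.aestronglyMeasurable

lemma int_V (hq1 : 1 < q) (hV0 : ∀ x, 0 ≤ V x) {x : EuclideanSpace ℝ (Fin n)} {r : ℝ}
    (hLq : IntegrableOn (fun y => V y ^ q) (ball x r) volume) :
    IntegrableOn V (ball x r) volume := by
  haveI : IsFiniteMeasure (volume.restrict (ball x r)) :=
    ⟨by rw [Measure.restrict_apply_univ]; exact measure_ball_lt_top⟩
  refine Integrable.mono' ((integrable_const 1).add hLq) (aesm_V hq1 hV0 hLq) ?_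
  filter_upwards with y
  rw [Real.norm_of_nonneg (hV0 y)]
  rcases le_or_gt (V y) 1 with h | h
  · have : (0:ℝ) ≤ V y ^ q := Real.rpow_nonneg (hV0 y) q
    simpa using h.trans (by linarith)
  · have h4 : V y ≤ V y ^ q := by
      calc V y = V y ^ (1:ℝ) := (Real.rpow_one _).symm
        _ ≤ V y ^ q := Real.rpow_le_rpow_of_exponent_le h.le hq1.le
    exact h4.trans (le_add_of_nonneg_left zero_le_one)

lemma ball_bound (hn : 0 < n) (hq1 : 1 < q) (hV0 : ∀ x, 0 ≤ V x)
    (hLq : ∀ (x : EuclideanSpace ℝ (Fin n)) (r : ℝ), 0 < r →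
      IntegrableOn (fun y => V y ^ q) (ball x r) volume)
    (hRH : ∀ (x : EuclideanSpace ℝ (Fin n)) (r : ℝ), 0 < r →
      ((volume (ball x r)).toReal⁻¹ * ∫ y in ball x r, V y ^ q) ^ q⁻¹ ≤
        C * ((volume (ball x r)).toReal⁻¹ * ∫ y in ball x r, V y))
    (x : EuclideanSpace ℝ (Fin n)) {r R : ℝ} (hr : 0 < r) (hrR : r ≤ R) :
    ∫ y in ball x r, V y ≤
      C * (r / R) ^ ((n : ℝ) * (1 - q⁻¹)) * ∫ y in ball x R, V y := by
  have hR : 0 < R := lt_of_lt_of_le hr hrR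
  have h := subset_bound hn hq1 hV0 hR (hLq x R hR) (hRH x R hR)
    measurableSet_ball (ball_subset_ball hrR)
  refine h.trans (le_of_eq ?_)
  congr 2
  have hc := unitBall_pos (n := n)
  rw [volBall hn x hr.le, volBall hn x hR.le]
  have e1 : r ^ n * (volume (ball (0:EuclideanSpace ℝ (Fin n)) 1)).toReal /
      (R ^ n * (volume (ball (0:EuclideanSpace ℝ (Fin n)) 1)).toReal) = (r / R) ^ n := by
    rw [div_pow]
    field_simp
  rw [e1, ← Real.rpow_natCast (r / R) n, ← Real.rpow_mul (by positivity)]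

lemma doubling_of (hn : 0 < n) (hq1 : 1 < q) (hV0 : ∀ x, 0 ≤ V x)
    (hLq : ∀ (x : EuclideanSpace ℝ (Fin n)) (r : ℝ), 0 < r →
      IntegrableOn (fun y => V y ^ q) (ball x r) volume)
    (hRH : ∀ (x : EuclideanSpace ℝ (Fin n)) (r : ℝ), 0 < r →
      ((volume (ball x r)).toReal⁻¹ * ∫ y in ball x r, V y ^ q) ^ q⁻¹ ≤
        C * ((volume (ball x r)).toReal⁻¹ * ∫ y in ball x r, V y))
    {lam δ : ℝ} (hδ0 : 0 ≤ δ) (hδ1 : δ < 1) (hlam1 : 1 < lam)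
    (hlamn : (lam : ℝ) ^ n = (1 - δ)⁻¹) (hCd : C * δ ^ (1 - q⁻¹) ≤ 1 / 2)
    (x : EuclideanSpace ℝ (Fin n)) {s : ℝ} (hs : 0 < s) :
    ∫ y in ball x (lam * s), V y ≤ 2 * ∫ y in ball x s, V y := by
  have hls : 0 < lam * s := by positivity
  have hsub : ball x s ⊆ ball x (lam * s) := ball_subset_ball (by nlinarith)
  set E : Set (EuclideanSpace ℝ (Fin n)) := ball x (lam * s) \ ball x s with hEdef
  have hE : MeasurableSet E := measurableSet_ball.diff measurableSet_ball
  have hEb : E ⊆ ball x (lam * s) := diff_subset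
  -- the volume ratio is δ
  have hc := unitBall_pos (n := n)
  have hvol : (volume E).toReal / (volume (ball x (lam * s))).toReal = δ := by
    rw [hEdef, measure_diff hsub measurableSet_ball.nullMeasurableSet measure_ball_lt_top.ne]
    rw [ENNReal.toReal_sub_of_le (measure_mono hsub) measure_ball_lt_top.ne]
    rw [volBall hn x hls.le, volBall hn x hs.le]
    have h1 : (0:ℝ) < lam ^ n := by positivity
    have h2 : s ^ n = (lam * s) ^ n / lam ^ n := by
      rw [mul_pow]; field_simp
    rw [h2, hlamn]
    have h3 : (0:ℝ) < (lam*s)^n := by positivity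
    field_simp
    ring
  -- integral splitting
  have hintL : IntegrableOn V (ball x (lam * s)) volume := int_V hq1 hV0 (hLq x _ hls)
  have hsplit : ∫ y in E, V y =
      (∫ y in ball x (lam * s), V y) - ∫ y in ball x s, V y := by
    rw [hEdef]
    exact integral_diff measurableSet_ball hintL hsub
  have hEbound := subset_bound hn hq1 hV0 hls (hLq x _ hls) (hRH x _ hls) hE hEb
  rw [hvol, hsplit] at hEbound
  have hFL : 0 ≤ ∫ y in ball x (lam * s), V y :=
    setIntegral_nonneg measurableSet_ball fun y _ => hV0 y
  have key : C * δ ^ (1 - q⁻¹) * ∫ y in ball x (lam * s), V y ≤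
      (1/2) * ∫ y in ball x (lam * s), V y :=
    mul_le_mul_of_nonneg_right hCd hFL
  linarith

lemma key_mem (hn : 0 < n) (hq1 : 1 < q) (hV0 : ∀ x, 0 ≤ V x)
    (hLq : ∀ (x : EuclideanSpace ℝ (Fin n)) (r : ℝ), 0 < r →
      IntegrableOn (fun y => V y ^ q) (ball x r) volume)
    (hRH : ∀ (x : EuclideanSpace ℝ (Fin n)) (r : ℝ), 0 < r →
      ((volume (ball x r)).toReal⁻¹ * ∫ y in ball x r, V y ^ q) ^ q⁻¹ ≤
        C * ((volume (ball x r)).toReal⁻¹ * ∫ y in ball x r, V y))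
    (hC0 : 0 < C)
    {ρ m C₄ β c₅ : ℝ} (hρ : 0 < ρ) (hm : 0 < m)
    (hδ₀pos : 0 < (n : ℝ) * (1 - q⁻¹) - ((n : ℝ) - 2))
    (hC₄ : C₄ = 4 * 2 ^ m * C)
    (hβ : β = max ((m - (n : ℝ) * (1 - q⁻¹)) / ((n : ℝ) * (1 - q⁻¹) - ((n : ℝ) - 2))) 0)
    (hc₅ : c₅ = min (C₄⁻¹ ^ ((n : ℝ) * (1 - q⁻¹) - ((n : ℝ) - 2))⁻¹) 1)
    (x y : EuclideanSpace ℝ (Fin n))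
    (hK3 : ∀ S, ρ ≤ S → (∫ z in ball y S, V z) ≤
      4 * (S / ρ) ^ m * ρ ^ ((n : ℝ) - 2)) :
    0 < c₅ * ρ * (1 + dist x y / ρ) ^ (-β) ∧
      (∫ z in ball x (c₅ * ρ * (1 + dist x y / ρ) ^ (-β)), V z) ≤
        (c₅ * ρ * (1 + dist x y / ρ) ^ (-β)) ^ ((n : ℝ) - 2) := by
  set α : ℝ := (n : ℝ) * (1 - q⁻¹) with hα
  set δ₀ : ℝ := α - ((n : ℝ) - 2) with hδ₀
  set d : ℝ := dist x y with hd
  have hd0 : 0 ≤ d := dist_nonneg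
  set b : ℝ := 1 + d / ρ with hb
  have hdρ : 0 ≤ d / ρ := by positivity
  have hb1 : 1 ≤ b := by rw [hb]; linarith
  have hb0 : 0 < b := lt_of_lt_of_le one_pos hb1
  have hC₄0 : 0 < C₄ := by rw [hC₄]; positivity
  have hc₅0 : 0 < c₅ := by rw [hc₅]; positivity
  have hc₅1 : c₅ ≤ 1 := by rw [hc₅]; exact min_le_right _ _
  have hβ0 : 0 ≤ β := by rw [hβ]; exact le_max_right _ _
  set t : ℝ := c₅ * ρ * b ^ (-β) with htdef
  have ht0 : 0 < t := by rw [htdef]; positivity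
  set T : ℝ := d + ρ with hT
  have hT0 : 0 < T := by rw [hT]; linarith
  have hbneg : b ^ (-β) ≤ 1 := Real.rpow_le_one_of_one_le_of_nonpos hb1 (by linarith)
  have htT : t ≤ T := by
    have h1 : c₅ * ρ * b ^ (-β) ≤ c₅ * ρ * 1 := mul_le_mul_of_nonneg_left hbneg (by positivity)
    have h2 : c₅ * ρ ≤ ρ := mul_le_of_le_one_left hρ.le hc₅1
    rw [htdef, hT]; linarith
  refine ⟨ht0, ?_⟩
  have step1 : (∫ z in ball x t, V z) ≤ C * (t / T) ^ α * ∫ z in ball x T, V z :=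
    ball_bound hn hq1 hV0 hLq hRH x ht0 htT
  have hsub : ball x T ⊆ ball y (ρ + 2 * d) := fun z hz => by
    rw [mem_ball] at hz ⊢
    have h3 := dist_triangle z x y
    rw [← hd] at h3
    rw [hT] at hz
    linarith
  have step2 : (∫ z in ball x T, V z) ≤ ∫ z in ball y (ρ + 2 * d), V z :=
    setIntegral_mono_set (int_V hq1 hV0 (hLq y _ (by linarith)))
      (Filter.Eventually.of_forall fun z => hV0 z) (HasSubset.Subset.eventuallyLE hsub)
  have step3 : (∫ z in ball y (ρ + 2 * d), V z) ≤
      4 * ((ρ + 2 * d) / ρ) ^ m * ρ ^ ((n : ℝ) - 2) := hK3 _ (by linarith)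
  have step4 : ((ρ + 2 * d) / ρ) ^ m ≤ 2 ^ m * b ^ m := by
    rw [← Real.mul_rpow (by norm_num) hb0.le]
    refine Real.rpow_le_rpow (by positivity) ?_ hm.le
    have h5 : (ρ + 2 * d) / ρ = 1 + 2 * (d / ρ) := by field_simp <;> ring
    rw [h5, hb]
    linarith
  have hFx : (∫ z in ball x t, V z) ≤ C₄ * (t / T) ^ α * (b ^ m * ρ ^ ((n : ℝ) - 2)) := by
    have h1 : C * (t / T) ^ α * ∫ z in ball x T, V z ≤
        C * (t / T) ^ α * (4 * (2 ^ m * b ^ m) * ρ ^ ((n : ℝ) - 2)) := by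
      refine mul_le_mul_of_nonneg_left ?_ (by positivity)
      refine step2.trans (step3.trans ?_)
      refine mul_le_mul_of_nonneg_right ?_ (Real.rpow_nonneg hρ.le _)
      exact mul_le_mul_of_nonneg_left step4 (by norm_num)
    refine (step1.trans h1).trans (le_of_eq ?_)
    rw [hC₄]; ring
  refine hFx.trans ?_
  have hTb : T = ρ * b := by rw [hT, hb]; field_simp; ring
  have et : t ^ α = t ^ ((n : ℝ) - 2) * t ^ δ₀ := by
    rw [← Real.rpow_add ht0]; congr 1; rw [hδ₀]; ring
  have eT : T ^ α = ρ ^ ((n : ℝ) - 2) * ρ ^ δ₀ * b ^ α := by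
    rw [hTb, Real.mul_rpow hρ.le hb0.le, ← Real.rpow_add hρ]
    congr 2
    rw [hδ₀]; ring
  have etδ : t ^ δ₀ = c₅ ^ δ₀ * ρ ^ δ₀ * b ^ (-β * δ₀) := by
    rw [htdef, Real.mul_rpow (by positivity) (Real.rpow_nonneg hb0.le _),
      Real.mul_rpow hc₅0.le hρ.le, ← Real.rpow_mul hb0.le]
  have ediv : (t / T) ^ α = t ^ α / T ^ α := Real.div_rpow ht0.le hT0.le α
  have e7 : b ^ (-β * δ₀) * b ^ m = b ^ (m - β * δ₀) := by
    rw [← Real.rpow_add hb0]; ring_nf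
  have hδ₀ne : δ₀ ≠ 0 := ne_of_gt hδ₀pos
  have e8 : c₅ ^ δ₀ ≤ C₄⁻¹ := by
    have h9 : c₅ ≤ C₄⁻¹ ^ δ₀⁻¹ := by rw [hc₅]; exact min_le_left _ _
    calc c₅ ^ δ₀ ≤ (C₄⁻¹ ^ δ₀⁻¹) ^ δ₀ := Real.rpow_le_rpow hc₅0.le h9 hδ₀pos.le
      _ = C₄⁻¹ := by
          rw [← Real.rpow_mul (by positivity), inv_mul_cancel₀ hδ₀ne, Real.rpow_one]
  have e9 : b ^ (m - β * δ₀) ≤ b ^ α := by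
    refine Real.rpow_le_rpow_of_exponent_le hb1 ?_
    have h10 : (m - α) / δ₀ ≤ β := by rw [hβ]; exact le_max_left _ _
    rw [div_le_iff₀ hδ₀pos] at h10
    linarith
  have hTα : 0 < T ^ α := Real.rpow_pos_of_pos hT0 α
  have hA1 : 0 < t ^ ((n : ℝ) - 2) := Real.rpow_pos_of_pos ht0 _
  have hA2 : 0 < ρ ^ ((n : ℝ) - 2) := Real.rpow_pos_of_pos hρ _
  have hA3 : 0 < ρ ^ δ₀ := Real.rpow_pos_of_pos hρ _
  have hA4 : 0 < b ^ α := Real.rpow_pos_of_pos hb0 _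
  calc C₄ * (t / T) ^ α * (b ^ m * ρ ^ ((n : ℝ) - 2))
      = C₄ * c₅ ^ δ₀ * (b ^ (-β * δ₀) * b ^ m) *
          (t ^ ((n : ℝ) - 2) * ρ ^ ((n : ℝ) - 2) * ρ ^ δ₀) / T ^ α := by
        rw [ediv, et, etδ]; ring
    _ = C₄ * c₅ ^ δ₀ * b ^ (m - β * δ₀) *
          (t ^ ((n : ℝ) - 2) * ρ ^ ((n : ℝ) - 2) * ρ ^ δ₀) / T ^ α := by rw [e7]
    _ ≤ C₄ * C₄⁻¹ * b ^ α *
          (t ^ ((n : ℝ) - 2) * ρ ^ ((n : ℝ) - 2) * ρ ^ δ₀) / T ^ α := by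
        have h12 : C₄ * c₅ ^ δ₀ * b ^ (m - β * δ₀) ≤ C₄ * C₄⁻¹ * b ^ α :=
          mul_le_mul (mul_le_mul_of_nonneg_left e8 hC₄0.le) e9
            (Real.rpow_nonneg hb0.le _) (by positivity)
        exact div_le_div_of_nonneg_right
          (mul_le_mul_of_nonneg_right h12 (by positivity)) hTα.le
    _ = t ^ ((n : ℝ) - 2) := by
        rw [mul_inv_cancel₀ hC₄0.ne', one_mul, eT]
        field_simp

def Sset {n : ℕ} (V : EuclideanSpace ℝ (Fin n) → ℝ) (x : EuclideanSpace ℝ (Fin n)) : Set ℝ :=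
  {r : ℝ | 0 < r ∧ (∫ y in ball x r, V y) ≤ r ^ ((n : ℝ) - 2)}

lemma Sset_nonempty (hn : 0 < n) (hq1 : 1 < q) (hV0 : ∀ x, 0 ≤ V x)
    (hLq : ∀ (x : EuclideanSpace ℝ (Fin n)) (r : ℝ), 0 < r →
      IntegrableOn (fun y => V y ^ q) (ball x r) volume)
    (hRH : ∀ (x : EuclideanSpace ℝ (Fin n)) (r : ℝ), 0 < r →
      ((volume (ball x r)).toReal⁻¹ * ∫ y in ball x r, V y ^ q) ^ q⁻¹ ≤
        C * ((volume (ball x r)).toReal⁻¹ * ∫ y in ball x r, V y))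
    (hC1 : 1 ≤ C)
    (hδ₀pos : 0 < (n : ℝ) * (1 - q⁻¹) - ((n : ℝ) - 2))
    (x : EuclideanSpace ℝ (Fin n)) : (Sset V x).Nonempty := by
  set α : ℝ := (n : ℝ) * (1 - q⁻¹) with hα
  set δ₀ : ℝ := α - ((n : ℝ) - 2) with hδ₀
  have hC0 : 0 < C := lt_of_lt_of_le one_pos hC1
  set F1 : ℝ := ∫ y in ball x 1, V y with hF1def
  have hF1 : 0 ≤ F1 := setIntegral_nonneg measurableSet_ball fun y _ => hV0 y
  set A : ℝ := C * (1 + F1) with hA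
  have hA1 : 1 ≤ A := by rw [hA]; nlinarith
  have hA0 : 0 < A := lt_of_lt_of_le one_pos hA1
  set r : ℝ := min 1 (A ^ (-δ₀⁻¹)) with hrdef
  have hr0 : 0 < r := by
    rw [hrdef]
    exact lt_min one_pos (Real.rpow_pos_of_pos hA0 _)
  have hr1 : r ≤ 1 := min_le_left _ _
  refine ⟨r, hr0, ?_⟩
  have h1 : (∫ y in ball x r, V y) ≤ C * (r / 1) ^ α * F1 :=
    ball_bound hn hq1 hV0 hLq hRH x hr0 hr1
  rw [div_one] at h1
  have h2 : r ^ α = r ^ ((n : ℝ) - 2) * r ^ δ₀ := by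
    rw [← Real.rpow_add hr0]; congr 1; rw [hδ₀]; ring
  have h3 : r ^ δ₀ ≤ A⁻¹ := by
    calc r ^ δ₀ ≤ (A ^ (-δ₀⁻¹)) ^ δ₀ :=
          Real.rpow_le_rpow hr0.le (min_le_right _ _) hδ₀pos.le
      _ = A⁻¹ := by
          rw [← Real.rpow_mul hA0.le, neg_mul, inv_mul_cancel₀ (ne_of_gt hδ₀pos),
            Real.rpow_neg_one]
  have h4 : C * r ^ δ₀ * F1 ≤ 1 := by
    have h5 : C * r ^ δ₀ * F1 ≤ C * A⁻¹ * F1 := by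
      refine mul_le_mul_of_nonneg_right (mul_le_mul_of_nonneg_left h3 hC0.le) hF1
    refine h5.trans ?_
    rw [hA]
    have hden : (0:ℝ) < C * (1 + F1) := by nlinarith
    rw [mul_inv]
    have : C * (C⁻¹ * (1 + F1)⁻¹) * F1 = F1 / (1 + F1) := by
      field_simp
    rw [this]
    rw [div_le_one (by linarith)]
    linarith
  refine h1.trans ?_
  rw [h2]
  calc C * (r ^ ((n : ℝ) - 2) * r ^ δ₀) * F1
      = r ^ ((n : ℝ) - 2) * (C * r ^ δ₀ * F1) := by ring
    _ ≤ r ^ ((n : ℝ) - 2) * 1 := by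
        exact mul_le_mul_of_nonneg_left h4 (Real.rpow_nonneg hr0.le _)
    _ = r ^ ((n : ℝ) - 2) := mul_one _

lemma exists_pos_ball (hq1 : 1 < q) (hV0 : ∀ x, 0 ≤ V x)
    (hLq : ∀ (x : EuclideanSpace ℝ (Fin n)) (r : ℝ), 0 < r →
      IntegrableOn (fun y => V y ^ q) (ball x r) volume)
    (hnt : ¬ ∀ᵐ x ∂(volume : Measure (EuclideanSpace ℝ (Fin n))), V x = 0) :
    ∃ k : ℕ, 0 < ∫ y in ball (0 : EuclideanSpace ℝ (Fin n)) ((k : ℝ) + 1), V y := by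
  by_contra h
  push_neg at h
  apply hnt
  have hk : ∀ k : ℕ, ∀ᵐ x ∂(volume.restrict (ball (0 : EuclideanSpace ℝ (Fin n)) ((k : ℝ) + 1))),
      V x = 0 := by
    intro k
    have hpos : (0:ℝ) < (k : ℝ) + 1 := by positivity
    have h0 : (∫ y in ball (0 : EuclideanSpace ℝ (Fin n)) ((k : ℝ) + 1), V y) = 0 :=
      le_antisymm (h k)
        (setIntegral_nonneg measurableSet_ball fun y _ => hV0 y)
    have := (integral_eq_zero_iff_of_nonneg (fun y => hV0 y)
      (int_V hq1 hV0 (hLq 0 _ hpos))).mp h0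
    filter_upwards [this] with z hz
    simpa using hz
  have huniv : (⋃ k : ℕ, ball (0 : EuclideanSpace ℝ (Fin n)) ((k : ℝ) + 1)) = univ := by
    ext z
    simp only [mem_iUnion, mem_ball, mem_univ, iff_true]
    obtain ⟨k, hk'⟩ := exists_nat_gt (dist z (0 : EuclideanSpace ℝ (Fin n)))
    exact ⟨k, by linarith⟩
  have h2 : ∀ᵐ x ∂(volume.restrict (⋃ k : ℕ,
      ball (0 : EuclideanSpace ℝ (Fin n)) ((k : ℝ) + 1))), V x = 0 :=
    (ae_restrict_iUnion_iff _ _).mpr hk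
  rwa [huniv, Measure.restrict_univ] at h2

lemma Sset_bddAbove (hn : 0 < n) (hq1 : 1 < q) (hV0 : ∀ x, 0 ≤ V x)
    (hLq : ∀ (x : EuclideanSpace ℝ (Fin n)) (r : ℝ), 0 < r →
      IntegrableOn (fun y => V y ^ q) (ball x r) volume)
    (hRH : ∀ (x : EuclideanSpace ℝ (Fin n)) (r : ℝ), 0 < r →
      ((volume (ball x r)).toReal⁻¹ * ∫ y in ball x r, V y ^ q) ^ q⁻¹ ≤
        C * ((volume (ball x r)).toReal⁻¹ * ∫ y in ball x r, V y))
    (hC1 : 1 ≤ C)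
    (hδ₀pos : 0 < (n : ℝ) * (1 - q⁻¹) - ((n : ℝ) - 2))
    {x₀ : EuclideanSpace ℝ (Fin n)} {r₀ : ℝ} (hr₀ : 0 < r₀)
    (hc₀ : 0 < ∫ y in ball x₀ r₀, V y)
    (x : EuclideanSpace ℝ (Fin n)) : BddAbove (Sset V x) := by
  set α : ℝ := (n : ℝ) * (1 - q⁻¹) with hα
  set δ₀ : ℝ := α - ((n : ℝ) - 2) with hδ₀
  have hC0 : 0 < C := lt_of_lt_of_le one_pos hC1
  set c₀ : ℝ := ∫ y in ball x₀ r₀, V y with hc₀def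
  set T₀ : ℝ := dist x x₀ + r₀ with hT₀def
  have hT₀ : 0 < T₀ := by rw [hT₀def]; have := dist_nonneg (x := x) (y := x₀); linarith
  refine ⟨max T₀ ((C * T₀ ^ α / c₀) ^ δ₀⁻¹), fun r hr => ?_⟩
  obtain ⟨hr0, hrS⟩ := hr
  rcases le_or_gt r T₀ with h | h
  · exact h.trans (le_max_left _ _)
  refine le_trans ?_ (le_max_right _ _)
  have hsub : ball x₀ r₀ ⊆ ball x T₀ := fun z hz => by
    rw [mem_ball] at hz ⊢
    have h3 := dist_triangle z x₀ x
    rw [hT₀def]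
    rw [dist_comm x x₀]
    linarith
  have h1 : c₀ ≤ ∫ y in ball x T₀, V y :=
    setIntegral_mono_set (int_V hq1 hV0 (hLq x _ hT₀))
      (Filter.Eventually.of_forall fun z => hV0 z) (HasSubset.Subset.eventuallyLE hsub)
  have h2 : (∫ y in ball x T₀, V y) ≤ C * (T₀ / r) ^ α * ∫ y in ball x r, V y :=
    ball_bound hn hq1 hV0 hLq hRH x hT₀ h.le
  have h3 : (∫ y in ball x r, V y) ≤ r ^ ((n : ℝ) - 2) := hrS
  have h4 : c₀ ≤ C * (T₀ / r) ^ α * r ^ ((n : ℝ) - 2) := by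
    refine h1.trans (h2.trans ?_)
    exact mul_le_mul_of_nonneg_left h3 (by positivity)
  have hrpos : 0 < r := hr0
  have h5 : C * (T₀ / r) ^ α * r ^ ((n : ℝ) - 2) = C * T₀ ^ α * r ^ (-δ₀) := by
    have e1 : (T₀ / r) ^ α = T₀ ^ α * (r ^ α)⁻¹ := by
      rw [Real.div_rpow hT₀.le hrpos.le, div_eq_mul_inv]
    have e2 : r ^ ((n : ℝ) - 2) = r ^ α * r ^ (-δ₀) := by
      rw [← Real.rpow_add hrpos]; congr 1; rw [hδ₀]; ring
    have hne : r ^ α ≠ 0 := ne_of_gt (Real.rpow_pos_of_pos hrpos α)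
    rw [e1, e2]
    field_simp
  rw [h5] at h4
  have h6 : c₀ * r ^ δ₀ ≤ C * T₀ ^ α := by
    have := mul_le_mul_of_nonneg_right h4 (Real.rpow_nonneg hrpos.le δ₀)
    rwa [mul_assoc, ← Real.rpow_add hrpos, neg_add_cancel, Real.rpow_zero, mul_one] at this
  have h7 : r ^ δ₀ ≤ C * T₀ ^ α / c₀ := by
    rw [le_div_iff₀ hc₀]
    linarith [mul_comm c₀ (r ^ δ₀)]
  calc r = (r ^ δ₀) ^ δ₀⁻¹ := by
        rw [← Real.rpow_mul hrpos.le, mul_inv_cancel₀ (ne_of_gt hδ₀pos), Real.rpow_one]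
    _ ≤ (C * T₀ ^ α / c₀) ^ δ₀⁻¹ :=
        Real.rpow_le_rpow (Real.rpow_nonneg hrpos.le _) h7 (by positivity)

lemma iter_double {f : ℝ → ℝ} {lam : ℝ}
    (hdbl : ∀ t, 0 < t → f (lam * t) ≤ 2 * f t) (hlam : 0 < lam) :
    ∀ (k : ℕ) (t : ℝ), 0 < t → f (lam ^ k * t) ≤ 2 ^ k * f t := by
  intro k
  induction k with
  | zero => intro t ht; simp
  | succ k ih =>
    intro t ht
    have h1 : lam ^ (k + 1) * t = lam ^ k * (lam * t) := by ring
    rw [h1]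
    calc f (lam ^ k * (lam * t)) ≤ 2 ^ k * f (lam * t) := ih _ (by positivity)
      _ ≤ 2 ^ k * (2 * f t) := mul_le_mul_of_nonneg_left (hdbl t ht) (by positivity)
      _ = 2 ^ (k + 1) * f t := by ring

end S9T

set_option maxHeartbeats 2000000

/-- If `P ⊆ Q` are cubes then `r_P/ρ(x_P) ≤ C(1 + r_Q/ρ(x_Q))^{1+l₀}`,
and consequently `Ψ_θ(P) ≤ C^θ Ψ_{θ(1+l₀)}(Q)` for every `θ ≥ 0`. -/
theorem statement9 {n : ℕ} (hn : 3 ≤ n) (q : ℝ) (hq : (n : ℝ) < q)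
    (V : Euc n → ℝ) (hV : IsSchrodingerPotential n q V) :
    ∃ C l₀ : ℝ, 0 < C ∧ 0 < l₀ ∧
      ∀ P Q : Cube n, 0 < P.side → 0 < Q.side → P.set ⊆ Q.set →
        P.side / critRho V P.center ≤
          C * (1 + Q.side / critRho V Q.center) ^ (1 + l₀) ∧
        ∀ θ : ℝ, 0 ≤ θ →
          Psi (critRho V) θ P ≤ C ^ θ * Psi (critRho V) (θ * (1 + l₀)) Q := by
  classical
  obtain ⟨hV0, hVnt, hLq0, C0, hC0pos, hRH0⟩ := hV
  have hLq : ∀ (x : Euc n) (r : ℝ), 0 < r →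
      IntegrableOn (fun y => V y ^ q) (ball x r) volume := hLq0
  -- numerics
  have hn0 : 0 < n := by omega
  have hn3 : (3 : ℝ) ≤ (n : ℝ) := by exact_mod_cast hn
  have hn1 : (1 : ℝ) ≤ (n : ℝ) := by linarith
  have hq0 : 0 < q := by linarith
  have hq1 : 1 < q := by linarith
  have hnq : (n : ℝ) * q⁻¹ < 1 := by
    rw [← div_eq_mul_inv]
    exact (div_lt_one hq0).mpr hq
  have hδ₀pos : 0 < (n : ℝ) * (1 - q⁻¹) - ((n : ℝ) - 2) := by
    have e : (n : ℝ) * (1 - q⁻¹) - ((n : ℝ) - 2) = 2 - (n : ℝ) * q⁻¹ := by ring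
    rw [e]; linarith
  -- normalized RH constant
  set C : ℝ := max C0 1 with hCdef
  have hC1 : 1 ≤ C := le_max_right _ _
  have hC0 : 0 < C := lt_of_lt_of_le one_pos hC1
  have hRH : ∀ (x : Euc n) (r : ℝ), 0 < r →
      ((volume (ball x r)).toReal⁻¹ * ∫ y in ball x r, V y ^ q) ^ q⁻¹ ≤
        C * ((volume (ball x r)).toReal⁻¹ * ∫ y in ball x r, V y) := by
    intro x r hr
    refine (hRH0 x r hr).trans ?_
    have hnn : 0 ≤ (volume (ball x r)).toReal⁻¹ * ∫ y in ball x r, V y := by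
      have := setIntegral_nonneg (μ := volume) measurableSet_ball
        (fun y (_ : y ∈ ball x r) => hV0 y)
      positivity
    exact mul_le_mul_of_nonneg_right (le_max_left _ _) hnn
  -- doubling constants
  set τ : ℝ := 1 - q⁻¹ with hτdef
  have hτ0 : 0 < τ := by
    have : q⁻¹ < 1 := by
      rw [inv_lt_one_iff₀]; right; exact hq1
    rw [hτdef]; linarith
  set δ : ℝ := (2 * C) ^ (-τ⁻¹) with hδdef
  have h2C : 1 < 2 * C := by linarith
  have hδpos : 0 < δ := Real.rpow_pos_of_pos (by linarith) _
  have hδ1 : δ < 1 := Real.rpow_lt_one_of_one_lt_of_neg h2C (neg_lt_zero.mpr (by positivity))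
  have hCd : C * δ ^ τ ≤ 1 / 2 := by
    have e1 : δ ^ τ = (2 * C)⁻¹ := by
      rw [hδdef, ← Real.rpow_mul (by linarith : (0:ℝ) ≤ 2 * C)]
      rw [show -τ⁻¹ * τ = (-1 : ℝ) by field_simp]
      exact Real.rpow_neg_one _
    rw [e1]
    rw [mul_inv]
    have : C * (2⁻¹ * C⁻¹) = 2⁻¹ * (C * C⁻¹) := by ring
    rw [this, mul_inv_cancel₀ hC0.ne', mul_one]
    norm_num
  set lam : ℝ := (1 - δ) ^ (-(n : ℝ)⁻¹) with hlamdef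
  have h1δ : 0 < 1 - δ := by linarith
  have hlam1 : 1 < lam :=
    Real.one_lt_rpow_iff_of_pos h1δ |>.mpr (Or.inr ⟨by linarith, neg_lt_zero.mpr (by positivity)⟩)
  have hlam0 : 0 < lam := lt_trans one_pos hlam1
  have hlamn : lam ^ n = (1 - δ)⁻¹ := by
    rw [hlamdef, ← Real.rpow_natCast ((1 - δ) ^ (-(n:ℝ)⁻¹)) n, ← Real.rpow_mul h1δ.le]
    rw [show -(n : ℝ)⁻¹ * (n : ℕ) = -1 by
      field_simp]
    exact Real.rpow_neg_one _
  have hdbl : ∀ (x : Euc n) (s : ℝ), 0 < s →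
      (∫ y in ball x (lam * s), V y) ≤ 2 * ∫ y in ball x s, V y := by
    intro x s hs
    exact S9T.doubling_of hn0 hq1 hV0 hLq hRH hδpos.le hδ1 hlam1 hlamn
      (by rw [← hτdef]; exact hCd) x hs
  -- nontrivial ball
  obtain ⟨k₀, hc₀⟩ := S9T.exists_pos_ball hq1 hV0 hLq hVnt
  have hr₀ : (0:ℝ) < (k₀ : ℝ) + 1 := by positivity
  -- Sset facts
  have hSne : ∀ x : Euc n, (S9T.Sset V x).Nonempty :=
    S9T.Sset_nonempty hn0 hq1 hV0 hLq hRH hC1 hδ₀pos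
  have hSbdd : ∀ x : Euc n, BddAbove (S9T.Sset V x) :=
    S9T.Sset_bddAbove hn0 hq1 hV0 hLq hRH hC1 hδ₀pos hr₀ hc₀
  have hrho_eq : ∀ x : Euc n, critRho V x = sSup (S9T.Sset V x) := fun x => rfl
  have hρub : ∀ (x : Euc n) (r : ℝ), r ∈ S9T.Sset V x → r ≤ critRho V x := by
    intro x r hr
    rw [hrho_eq]
    exact le_csSup (hSbdd x) hr
  have hρpos : ∀ x : Euc n, 0 < critRho V x := by
    intro x
    obtain ⟨r, hr⟩ := hSne x
    exact lt_of_lt_of_le hr.1 (hρub x r hr)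
  have hn2 : (0:ℝ) ≤ (n : ℝ) - 2 := by linarith
  -- K1
  have hK1 : ∀ y : Euc n, (∫ z in ball y (critRho V y), V z) ≤
      2 * critRho V y ^ ((n : ℝ) - 2) := by
    intro y
    set ρy : ℝ := critRho V y with hρydef
    have hρy : 0 < ρy := hρpos y
    have hlt : ρy / lam < ρy := div_lt_self hρy hlam1
    rw [hρydef, hrho_eq] at hlt
    obtain ⟨r', hr'S, hr'gt⟩ := exists_lt_of_lt_csSup (hSne y) hlt
    have hr'0 : 0 < r' := hr'S.1
    have h1 : ρy ≤ lam * r' := by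
      rw [div_lt_iff₀ hlam0] at hr'gt
      rw [mul_comm]
      exact hr'gt.le
    have h2 : (∫ z in ball y ρy, V z) ≤ ∫ z in ball y (lam * r'), V z :=
      setIntegral_mono_set (S9T.int_V hq1 hV0 (hLq y _ (by positivity)))
        (Filter.Eventually.of_forall fun z => hV0 z)
        (HasSubset.Subset.eventuallyLE (ball_subset_ball h1))
    have h3 : (∫ z in ball y (lam * r'), V z) ≤ 2 * ∫ z in ball y r', V z := hdbl y r' hr'0
    have h4 : (∫ z in ball y r', V z) ≤ r' ^ ((n : ℝ) - 2) := hr'S.2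
    have h5 : r' ^ ((n : ℝ) - 2) ≤ ρy ^ ((n : ℝ) - 2) :=
      Real.rpow_le_rpow hr'0.le (hρub y r' hr'S) hn2
    linarith
  -- growth exponent
  set m : ℝ := Real.log 2 / Real.log lam with hmdef
  have hloglam : 0 < Real.log lam := Real.log_pos hlam1
  have hm : 0 < m := div_pos (Real.log_pos one_lt_two) hloglam
  -- K3
  have hK3 : ∀ (y : Euc n) (S : ℝ), critRho V y ≤ S →
      (∫ z in ball y S, V z) ≤ 4 * (S / critRho V y) ^ m *
        critRho V y ^ ((n : ℝ) - 2) := by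
    intro y S hS
    set ρy : ℝ := critRho V y with hρydef
    have hρy : 0 < ρy := hρpos y
    have hS0 : 0 < S := lt_of_lt_of_le hρy hS
    have hSρ : 1 ≤ S / ρy := (one_le_div hρy).mpr hS
    set k : ℕ := ⌈Real.log (S / ρy) / Real.log lam⌉₊ with hkdef
    have hlog0 : 0 ≤ Real.log (S / ρy) := Real.log_nonneg hSρ
    have hk1 : S ≤ lam ^ k * ρy := by
      have hceil : Real.log (S / ρy) / Real.log lam ≤ (k : ℝ) := Nat.le_ceil _
      have h1 : Real.log (S / ρy) ≤ (k : ℝ) * Real.log lam := by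
        rw [div_le_iff₀ hloglam] at hceil
        exact hceil
      have h2 : S / ρy ≤ lam ^ k := by
        have := Real.exp_le_exp.mpr h1
        rw [Real.exp_log (by positivity)] at this
        refine this.trans (le_of_eq ?_)
        rw [← Real.exp_log hlam0, ← Real.exp_nat_mul, Real.exp_log hlam0]
      rw [div_le_iff₀ hρy] at h2
      linarith [h2]
    have hk2 : (2:ℝ) ^ k ≤ 2 * (S / ρy) ^ m := by
      have hceil : (k : ℝ) < Real.log (S / ρy) / Real.log lam + 1 :=
        Nat.ceil_lt_add_one (div_nonneg hlog0 hloglam.le)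
      have h1 : (k : ℝ) * Real.log 2 ≤
          Real.log (S / ρy) * m + Real.log 2 := by
        have h2 : (k : ℝ) * Real.log 2 ≤
            (Real.log (S / ρy) / Real.log lam + 1) * Real.log 2 :=
          mul_le_mul_of_nonneg_right hceil.le (Real.log_nonneg one_le_two)
        refine h2.trans (le_of_eq ?_)
        rw [hmdef]
        field_simp
      have h3 : (2:ℝ) ^ k = Real.exp ((k : ℝ) * Real.log 2) := by
        rw [← Real.exp_log (by norm_num : (0:ℝ) < 2), ← Real.exp_nat_mul,
          Real.exp_log (by norm_num : (0:ℝ) < 2)]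
      rw [h3]
      have h4 : Real.exp ((k : ℝ) * Real.log 2) ≤
          Real.exp (Real.log (S / ρy) * m + Real.log 2) := Real.exp_le_exp.mpr h1
      refine h4.trans (le_of_eq ?_)
      rw [Real.exp_add, Real.exp_log (by norm_num : (0:ℝ) < 2)]
      rw [← Real.rpow_def_of_pos (by positivity : (0:ℝ) < S / ρy)]
      ring
    have hmono : (∫ z in ball y S, V z) ≤ ∫ z in ball y (lam ^ k * ρy), V z :=
      setIntegral_mono_set (S9T.int_V hq1 hV0 (hLq y _ (by positivity)))
        (Filter.Eventually.of_forall fun z => hV0 z)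
        (HasSubset.Subset.eventuallyLE (ball_subset_ball hk1))
    have hiter := S9T.iter_double (f := fun t => ∫ z in ball y t, V z)
      (fun t ht => hdbl y t ht) hlam0 k ρy hρy
    have hK1y := hK1 y
    have h6 : (∫ z in ball y (lam ^ k * ρy), V z) ≤
        (2:ℝ) ^ k * (2 * ρy ^ ((n : ℝ) - 2)) := by
      refine hiter.trans ?_
      exact mul_le_mul_of_nonneg_left hK1y (by positivity)
    have h7 : (2:ℝ) ^ k * (2 * ρy ^ ((n : ℝ) - 2)) ≤
        (2 * (S / ρy) ^ m) * (2 * ρy ^ ((n : ℝ) - 2)) := by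
      refine mul_le_mul_of_nonneg_right hk2 ?_
      positivity
    calc (∫ z in ball y S, V z) ≤ ∫ z in ball y (lam ^ k * ρy), V z := hmono
      _ ≤ (2:ℝ) ^ k * (2 * ρy ^ ((n : ℝ) - 2)) := h6
      _ ≤ (2 * (S / ρy) ^ m) * (2 * ρy ^ ((n : ℝ) - 2)) := h7
      _ = 4 * (S / ρy) ^ m * ρy ^ ((n : ℝ) - 2) := by ring
  -- constants for the key estimate
  set C₄ : ℝ := 4 * 2 ^ m * C with hC₄def
  set β : ℝ := max ((m - (n : ℝ) * (1 - q⁻¹)) / ((n : ℝ) * (1 - q⁻¹) - ((n : ℝ) - 2))) 0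
    with hβdef
  set c₅ : ℝ := min (C₄⁻¹ ^ ((n : ℝ) * (1 - q⁻¹) - ((n : ℝ) - 2))⁻¹) 1 with hc₅def
  have hC₄0 : 0 < C₄ := by rw [hC₄def]; positivity
  have hc₅0 : 0 < c₅ := by
    rw [hc₅def]
    exact lt_min (Real.rpow_pos_of_pos (by positivity) _) one_pos
  have hβ0 : 0 ≤ β := le_max_right _ _
  -- the key lower bound on critRho
  have hkey : ∀ x y : Euc n,
      c₅ * critRho V y * (1 + dist x y / critRho V y) ^ (-β) ≤ critRho V x := by
    intro x y
    have h := S9T.key_mem hn0 hq1 hV0 hLq hRH hC0 (hρpos y) hm hδ₀pos hC₄def hβdef hc₅def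
      x y (hK3 y)
    exact hρub x _ ⟨h.1, h.2⟩
  -- final constants
  set C₁ : ℝ := max (c₅⁻¹ * (n : ℝ) ^ β) 1 with hC₁def
  have hC₁1 : 1 ≤ C₁ := le_max_right _ _
  have hC₁0 : 0 < C₁ := lt_of_lt_of_le one_pos hC₁1
  refine ⟨2 * C₁, β + 1, by positivity, by positivity, ?_⟩
  intro P Q hP hQ hPQ
  set x : Euc n := P.center with hxdef
  set y : Euc n := Q.center with hydef
  set r : ℝ := P.side with hrdef
  set R : ℝ := Q.side with hRdef
  -- geometry: P.center ∈ Q.set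
  have hcenP : x ∈ P.set := by
    intro i
    simp only [← hxdef, sub_self, abs_zero]
    linarith [hrdef]
  have hxy : ∀ i, |x i - y i| ≤ R / 2 := hPQ hcenP
  -- geometry: r ≤ R
  have hrR : r ≤ R := by
    set i0 : Fin n := ⟨0, hn0⟩ with hi0
    set zp : Euc n := x + (r / 2) • (EuclideanSpace.single i0 (1:ℝ)) with hzp
    set zm : Euc n := x - (r / 2) • (EuclideanSpace.single i0 (1:ℝ)) with hzm
    have hzpc : ∀ i, zp i - x i = (if i = i0 then r / 2 else 0) := by
      intro i
      rw [hzp, PiLp.add_apply, PiLp.smul_apply, EuclideanSpace.single_apply, smul_eq_mul]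
      split_ifs <;> ring
    have hzmc : ∀ i, zm i - x i = (if i = i0 then -(r / 2) else 0) := by
      intro i
      rw [hzm, PiLp.sub_apply, PiLp.smul_apply, EuclideanSpace.single_apply, smul_eq_mul]
      split_ifs <;> ring
    have hzpP : zp ∈ P.set := by
      intro i
      rw [show zp i - P.center i = zp i - x i from rfl, hzpc i]
      split_ifs
      · rw [abs_of_nonneg (by positivity)]
      · simpa using by positivity
    have hzmP : zm ∈ P.set := by
      intro i
      rw [show zm i - P.center i = zm i - x i from rfl, hzmc i]
      split_ifs
      · rw [abs_neg, abs_of_nonneg (by positivity)]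
      · simpa using by positivity
    have h1 := hPQ hzpP i0
    have h2 := hPQ hzmP i0
    have e1 : zp i0 - y i0 = (x i0 - y i0) + r / 2 := by
      have := hzpc i0
      rw [if_pos rfl] at this
      linarith [this]
    have e2 : zm i0 - y i0 = (x i0 - y i0) - r / 2 := by
      have := hzmc i0
      rw [if_pos rfl] at this
      linarith [this]
    rw [show zp i0 - Q.center i0 = zp i0 - y i0 from rfl, e1, abs_le] at h1
    rw [show zm i0 - Q.center i0 = zm i0 - y i0 from rfl, e2, abs_le] at h2
    obtain ⟨h1a, h1b⟩ := h1
    obtain ⟨h2a, h2b⟩ := h2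
    linarith
  -- geometry: dist bound
  have hdxy : dist x y ≤ (n : ℝ) * R := by
    rw [EuclideanSpace.dist_eq]
    have hsum : (∑ i, dist (x i) (y i) ^ 2) ≤ (n : ℝ) * (R / 2) ^ 2 := by
      calc (∑ i, dist (x i) (y i) ^ 2) ≤ ∑ _i : Fin n, (R / 2) ^ 2 := by
            refine Finset.sum_le_sum fun i _ => ?_
            rw [Real.dist_eq]
            have := hxy i
            nlinarith [abs_nonneg (x i - y i)]
        _ = (n : ℝ) * (R / 2) ^ 2 := by
            rw [Finset.sum_const, Finset.card_univ, Fintype.card_fin, nsmul_eq_mul]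
    have h2 : (n : ℝ) * (R / 2) ^ 2 ≤ ((n : ℝ) * R) ^ 2 := by nlinarith
    calc Real.sqrt (∑ i, dist (x i) (y i) ^ 2) ≤ Real.sqrt (((n : ℝ) * R) ^ 2) :=
          Real.sqrt_le_sqrt (hsum.trans h2)
      _ = (n : ℝ) * R := Real.sqrt_sq (by positivity)
  -- main chain
  set ρx : ℝ := critRho V x with hρxdef
  set ρy : ℝ := critRho V y with hρydef
  have hρx0 : 0 < ρx := hρpos x
  have hρy0 : 0 < ρy := hρpos y
  set b : ℝ := 1 + dist x y / ρy with hbdef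
  have hbnn : 0 ≤ dist x y / ρy := by positivity
  have hb1 : 1 ≤ b := by rw [hbdef]; linarith
  have hb0 : 0 < b := lt_of_lt_of_le one_pos hb1
  set t : ℝ := c₅ * ρy * b ^ (-β) with htdef
  have ht0 : 0 < t := by rw [htdef]; positivity
  have htx : t ≤ ρx := hkey x y
  set B : ℝ := 1 + R / ρy with hBdef
  have hBnn : 0 ≤ R / ρy := by positivity
  have hB1 : 1 ≤ B := by rw [hBdef]; linarith
  have hB0 : 0 < B := lt_of_lt_of_le one_pos hB1
  have hbB : b ≤ (n : ℝ) * B := by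
    rw [hbdef, hBdef]
    have h1 : dist x y / ρy ≤ (n : ℝ) * R / ρy := by gcongr
    have h2 : (n : ℝ) * (1 + R / ρy) = (n : ℝ) + (n : ℝ) * R / ρy := by ring
    rw [h2]
    linarith
  -- bound r / ρx
  have hchain : r / ρx ≤ C₁ * B ^ (1 + (β + 1)) := by
    have h1 : r / ρx ≤ r / t := by gcongr
    have hteq : r / t = r * b ^ β / (c₅ * ρy) := by
      rw [htdef, Real.rpow_neg hb0.le]
      have hbb : b ^ β ≠ 0 := ne_of_gt (Real.rpow_pos_of_pos hb0 β)
      field_simp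
    have h4 : b ^ β ≤ (n : ℝ) ^ β * B ^ β := by
      rw [← Real.mul_rpow (by positivity) hB0.le]
      exact Real.rpow_le_rpow hb0.le hbB hβ0
    have h5 : r * b ^ β / (c₅ * ρy) ≤ R * ((n : ℝ) ^ β * B ^ β) / (c₅ * ρy) := by
      gcongr
    have h6 : R * ((n : ℝ) ^ β * B ^ β) / (c₅ * ρy) =
        (c₅⁻¹ * (n : ℝ) ^ β) * (B ^ β * (R / ρy)) := by
      field_simp
    have h7 : B ^ β * (R / ρy) ≤ B ^ β * B := by
      refine mul_le_mul_of_nonneg_left ?_ (Real.rpow_nonneg hB0.le β)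
      rw [hBdef]; linarith
    have h8 : B ^ β * B = B ^ (β + 1) := by
      rw [Real.rpow_add hB0, Real.rpow_one]
    have h9 : c₅⁻¹ * (n : ℝ) ^ β ≤ C₁ := le_max_left _ _
    have h10 : (c₅⁻¹ * (n : ℝ) ^ β) * (B ^ β * (R / ρy)) ≤ C₁ * B ^ (β + 1) := by
      have h11 : (c₅⁻¹ * (n : ℝ) ^ β) * (B ^ β * (R / ρy)) ≤
          (c₅⁻¹ * (n : ℝ) ^ β) * B ^ (β + 1) := by
        rw [← h8]
        exact mul_le_mul_of_nonneg_left h7 (by positivity)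
      refine h11.trans ?_
      exact mul_le_mul_of_nonneg_right h9 (Real.rpow_nonneg hB0.le _)
    have h12 : C₁ * B ^ (β + 1) ≤ C₁ * B ^ (1 + (β + 1)) := by
      refine mul_le_mul_of_nonneg_left ?_ hC₁0.le
      exact Real.rpow_le_rpow_of_exponent_le hB1 (by linarith)
    calc r / ρx ≤ r / t := h1
      _ = r * b ^ β / (c₅ * ρy) := hteq
      _ ≤ R * ((n : ℝ) ^ β * B ^ β) / (c₅ * ρy) := h5
      _ = (c₅⁻¹ * (n : ℝ) ^ β) * (B ^ β * (R / ρy)) := h6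
      _ ≤ C₁ * B ^ (β + 1) := h10
      _ ≤ C₁ * B ^ (1 + (β + 1)) := h12
  have hBe1 : (1 : ℝ) ≤ B ^ (1 + (β + 1)) := by
    have := Real.rpow_le_rpow_of_exponent_le hB1 (by linarith : (0:ℝ) ≤ 1 + (β + 1))
    rwa [Real.rpow_zero] at this
  have hpart1 : r / ρx ≤ 2 * C₁ * B ^ (1 + (β + 1)) := by
    have hnn : 0 ≤ C₁ * B ^ (1 + (β + 1)) :=
      mul_nonneg hC₁0.le (Real.rpow_nonneg hB0.le _)
    calc r / ρx ≤ C₁ * B ^ (1 + (β + 1)) := hchain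
      _ ≤ 2 * C₁ * B ^ (1 + (β + 1)) := by linarith
  refine ⟨hpart1, ?_⟩
  intro θ hθ
  have hone : (1 : ℝ) ≤ C₁ * B ^ (1 + (β + 1)) := by
    calc (1 : ℝ) = 1 * 1 := by norm_num
      _ ≤ C₁ * B ^ (1 + (β + 1)) := mul_le_mul hC₁1 hBe1 zero_le_one hC₁0.le
  have h2 : 1 + r / ρx ≤ 2 * C₁ * B ^ (1 + (β + 1)) := by
    have := hchain
    linarith
  have hrρnn : 0 ≤ 1 + r / ρx := by positivity
  show Psi (critRho V) θ P ≤ (2 * C₁) ^ θ * Psi (critRho V) (θ * (1 + (β + 1))) Q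
  have ePsiP : Psi (critRho V) θ P = (1 + r / ρx) ^ θ := rfl
  have ePsiQ : Psi (critRho V) (θ * (1 + (β + 1))) Q = B ^ (θ * (1 + (β + 1))) := rfl
  rw [ePsiP, ePsiQ]
  calc (1 + r / ρx) ^ θ ≤ (2 * C₁ * B ^ (1 + (β + 1))) ^ θ :=
        Real.rpow_le_rpow hrρnn h2 hθ
    _ = (2 * C₁) ^ θ * (B ^ (1 + (β + 1))) ^ θ :=
        Real.mul_rpow (by positivity) (Real.rpow_nonneg hB0.le _)
    _ = (2 * C₁) ^ θ * B ^ (θ * (1 + (β + 1))) := by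
        rw [← Real.rpow_mul hB0.le, mul_comm (1 + (β + 1)) θ]
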